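/- Let m₁, m₂, m₃, m be positive integers and let f : F₂^{m₁} × F₂^{m₂} × F₂^{m₃} → F₂^m be a vectorial Boolean function. Then for every a ∈ F₂^{m₁}, every c ∈ F₂^{m₃} and every b ∈ F₂^m with b ≠ 0, one has Σ_{x₂ ∈ F₂^{m₂}} cor_{x₁,x₃}²(a·x₁ ⊕ c·x₃ ⊕ b·f(x₁,x₂,x₃)) = 2^{m₂} · Σ_{d ∈ F₂^{m₂}} cor_{x₁,x₂,x₃}²(a·x₁ ⊕ d·x₂ ⊕ c·x₃ ⊕ b·f(x₁,x₂,x₃)), where cor_{x₁,x₃} denotes the correlation taken with x₂ fixed and (x₁,x₃) uniform on F₂^{m₁} × F₂^{m₃}, and cor_{x₁,x₂,x₃} denotes the correlation with (x₁,x₂,x₃) uniform on F₂^{m₁} × F₂^{m₂} × F₂^{m₃}. -/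

import Mathlib

/-- The correlation of a Boolean function `g` on a finite domain:
`cor g = 2·Pr[g = 0] − 1 = (1/|α|) · Σ_x (−1)^{g x}`. -/
noncomputable def cor {α : Type*} [Fintype α] (g : α → ZMod 2) : ℝ :=
  (∑ x : α, (-1 : ℝ) ^ (g x).val) / (Fintype.card α : ℝ)

/-- The canonical inner product `a·x = ⊕ᵢ aᵢ xᵢ` on `F₂^n`. -/
def ip {n : ℕ} (a x : Fin n → ZMod 2) : ZMod 2 := ∑ i, a i * x i

noncomputable def chi (u : ZMod 2) : ℝ := (-1 : ℝ) ^ u.val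

lemma zmod2_eq_one {u : ZMod 2} (h : u ≠ 0) : u = 1 := by
  revert h; revert u; decide

lemma chi_add (u v : ZMod 2) : chi (u + v) = chi u * chi v := by
  rcases (show u = 0 ∨ u = 1 by revert u; decide) with rfl | rfl <;>
    rcases (show v = 0 ∨ v = 1 by revert v; decide) with rfl | rfl <;>
    norm_num [chi, show ((2 : ZMod 2)).val = 0 from rfl, show ((1 : ZMod 2)).val = 1 from rfl]

lemma chi_sum {ι : Type*} (s : Finset ι) (g : ι → ZMod 2) :
    chi (∑ i ∈ s, g i) = ∏ i ∈ s, chi (g i) := by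
  induction s using Finset.cons_induction with
  | empty => simp [chi]
  | cons a s ha ih => rw [Finset.sum_cons, Finset.prod_cons, chi_add, ih]

lemma sum_chi_single (z : ZMod 2) :
    ∑ t : ZMod 2, chi (t * z) = 1 + chi z := by
  rw [show (Finset.univ : Finset (ZMod 2)) = {0, 1} from by decide]
  simp [chi]

lemma sum_chi {n : ℕ} (z : Fin n → ZMod 2) :
    ∑ d : Fin n → ZMod 2, chi (ip d z) = if z = 0 then (2 : ℝ) ^ n else 0 := by
  have h1 : ∀ d : Fin n → ZMod 2, chi (ip d z) = ∏ i, chi (d i * z i) := by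
    intro d; rw [ip, chi_sum]
  simp_rw [h1]
  rw [← Fintype.piFinset_univ,
    ← Finset.prod_univ_sum (fun _ : Fin n => (Finset.univ : Finset (ZMod 2)))
      (fun i t => chi (t * z i))]
  simp_rw [sum_chi_single]
  by_cases hz : z = 0
  · subst hz; simp [chi]; norm_num
  · rw [if_neg hz]
    obtain ⟨i, hi⟩ := Function.ne_iff.mp hz
    apply Finset.prod_eq_zero (Finset.mem_univ i)
    have h0 : z i ≠ 0 := by simpa using hi
    rw [zmod2_eq_one h0]
    norm_num [chi, show ((1 : ZMod 2)).val = 1 from rfl]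

lemma parseval {n : ℕ} (S : (Fin n → ZMod 2) → ℝ) :
    ∑ d : Fin n → ZMod 2, (∑ x : Fin n → ZMod 2, chi (ip d x) * S x) ^ 2
      = 2 ^ n * ∑ x : Fin n → ZMod 2, (S x) ^ 2 := by
  have key : ∀ d x y : Fin n → ZMod 2,
      (chi (ip d x) * S x) * (chi (ip d y) * S y) = chi (ip d (x + y)) * (S x * S y) := by
    intro d x y
    have : ip d (x + y) = ip d x + ip d y := by
      simp [ip, mul_add, Finset.sum_add_distrib]
    rw [this, chi_add]; ring
  calc ∑ d : Fin n → ZMod 2, (∑ x : Fin n → ZMod 2, chi (ip d x) * S x) ^ 2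
      = ∑ d : Fin n → ZMod 2, ∑ x : Fin n → ZMod 2, ∑ y : Fin n → ZMod 2,
          chi (ip d (x + y)) * (S x * S y) := by
        simp_rw [sq, Finset.sum_mul_sum, key]
    _ = ∑ x : Fin n → ZMod 2, ∑ y : Fin n → ZMod 2,
          (∑ d : Fin n → ZMod 2, chi (ip d (x + y))) * (S x * S y) := by
        rw [Finset.sum_comm]
        congr 1; ext x
        rw [Finset.sum_comm]
        congr 1; ext y
        rw [Finset.sum_mul]
    _ = 2 ^ n * ∑ x : Fin n → ZMod 2, (S x) ^ 2 := by
        simp_rw [sum_chi]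
        rw [Finset.mul_sum]
        congr 1; ext x
        rw [Finset.sum_eq_single x]
        · have : x + x = 0 := by
            ext i; simp [CharTwo.add_self_eq_zero]
          rw [if_pos this]; ring
        · intro y _ hyx
          have hxx : x + x = 0 := by
            ext i; simp [CharTwo.add_self_eq_zero]
          have : x + y ≠ 0 := by
            intro h
            apply hyx
            calc y = (x + x) + y := by rw [hxx, zero_add]
              _ = x + (x + y) := by rw [add_assoc]
              _ = x := by rw [h, add_zero]
          rw [if_neg this, zero_mul]
        · intro h; exact absurd (Finset.mem_univ x) h

/-- Theorem 2.2:
For a vectorial Boolean function `f : F₂^{m₁} × F₂^{m₂} × F₂^{m₃} → F₂^m`, any masks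
`a ∈ F₂^{m₁}`, `c ∈ F₂^{m₃}` and nonzero `b ∈ F₂^m`,
`Σ_{x₂} cor_{x₁,x₃}²(a·x₁ ⊕ c·x₃ ⊕ b·f(x₁,x₂,x₃))
   = 2^{m₂} · Σ_{d} cor_{x₁,x₂,x₃}²(a·x₁ ⊕ d·x₂ ⊕ c·x₃ ⊕ b·f(x₁,x₂,x₃))`. -/
theorem statement1 (m₁ m₂ m₃ m : ℕ) (hm₁ : 0 < m₁) (hm₂ : 0 < m₂) (hm₃ : 0 < m₃)
    (hm : 0 < m)
    (f : (Fin m₁ → ZMod 2) → (Fin m₂ → ZMod 2) → (Fin m₃ → ZMod 2) → (Fin m → ZMod 2))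
    (a : Fin m₁ → ZMod 2) (c : Fin m₃ → ZMod 2) (b : Fin m → ZMod 2) (hb : b ≠ 0) :
    ∑ x₂ : Fin m₂ → ZMod 2,
        (cor (fun p : (Fin m₁ → ZMod 2) × (Fin m₃ → ZMod 2) =>
          ip a p.1 + ip c p.2 + ip b (f p.1 x₂ p.2))) ^ 2
      = 2 ^ m₂ *
        ∑ d : Fin m₂ → ZMod 2,
          (cor (fun p : (Fin m₁ → ZMod 2) × (Fin m₂ → ZMod 2) × (Fin m₃ → ZMod 2) =>
            ip a p.1 + ip d p.2.1 + ip c p.2.2 + ip b (f p.1 p.2.1 p.2.2))) ^ 2 := by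
  set S : (Fin m₂ → ZMod 2) → ℝ := fun x₂ =>
    ∑ p : (Fin m₁ → ZMod 2) × (Fin m₃ → ZMod 2),
      chi (ip a p.1 + ip c p.2 + ip b (f p.1 x₂ p.2)) with hS
  have cardA : (Fintype.card ((Fin m₁ → ZMod 2) × (Fin m₃ → ZMod 2)) : ℝ)
      = 2 ^ m₁ * 2 ^ m₃ := by
    simp [Fintype.card_prod, Fintype.card_fun]
  have cardB : (Fintype.card ((Fin m₁ → ZMod 2) × (Fin m₂ → ZMod 2) × (Fin m₃ → ZMod 2)) : ℝ)
      = 2 ^ m₁ * 2 ^ m₂ * 2 ^ m₃ := by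
    simp [Fintype.card_prod, Fintype.card_fun]; push_cast; ring
  have hcorL : ∀ x₂ : Fin m₂ → ZMod 2,
      cor (fun p : (Fin m₁ → ZMod 2) × (Fin m₃ → ZMod 2) =>
        ip a p.1 + ip c p.2 + ip b (f p.1 x₂ p.2)) = S x₂ / (2 ^ m₁ * 2 ^ m₃) := by
    intro x₂; rw [cor, cardA]; rfl
  have hcorR : ∀ d : Fin m₂ → ZMod 2,
      cor (fun p : (Fin m₁ → ZMod 2) × (Fin m₂ → ZMod 2) × (Fin m₃ → ZMod 2) =>
        ip a p.1 + ip d p.2.1 + ip c p.2.2 + ip b (f p.1 p.2.1 p.2.2))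
      = (∑ x₂ : Fin m₂ → ZMod 2, chi (ip d x₂) * S x₂) / (2 ^ m₁ * 2 ^ m₂ * 2 ^ m₃) := by
    intro d
    rw [cor, cardB]
    congr 1
    have hnum : ∀ (x₁ : Fin m₁ → ZMod 2) (x₂ : Fin m₂ → ZMod 2) (x₃ : Fin m₃ → ZMod 2),
        chi (ip a x₁ + ip d x₂ + ip c x₃ + ip b (f x₁ x₂ x₃))
        = chi (ip d x₂) * chi (ip a x₁ + ip c x₃ + ip b (f x₁ x₂ x₃)) := by
      intro x₁ x₂ x₃
      rw [← chi_add]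
      congr 1; ring
    calc (∑ p : (Fin m₁ → ZMod 2) × (Fin m₂ → ZMod 2) × (Fin m₃ → ZMod 2),
          (-1 : ℝ) ^ (ip a p.1 + ip d p.2.1 + ip c p.2.2 + ip b (f p.1 p.2.1 p.2.2)).val)
        = ∑ x₁ : Fin m₁ → ZMod 2, ∑ x₂ : Fin m₂ → ZMod 2, ∑ x₃ : Fin m₃ → ZMod 2,
            chi (ip d x₂) * chi (ip a x₁ + ip c x₃ + ip b (f x₁ x₂ x₃)) := by
          rw [Fintype.sum_prod_type]
          congr 1; ext x₁
          rw [Fintype.sum_prod_type]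
          congr 1; ext x₂
          congr 1; ext x₃
          exact hnum x₁ x₂ x₃
      _ = ∑ x₂ : Fin m₂ → ZMod 2, chi (ip d x₂) * S x₂ := by
          rw [Finset.sum_comm]
          congr 1; ext x₂
          rw [hS]
          simp only
          rw [Fintype.sum_prod_type, Finset.mul_sum]
          congr 1; ext x₁
          rw [Finset.mul_sum]
  simp_rw [hcorL, hcorR, div_pow]
  rw [← Finset.sum_div, ← Finset.sum_div, parseval]
  have h1 : ((2 : ℝ) ^ m₁ * 2 ^ m₃) ^ 2 ≠ 0 := by positivity
  have h2 : ((2 : ℝ) ^ m₁ * 2 ^ m₂ * 2 ^ m₃) ^ 2 ≠ 0 := by positivity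
  field_simp
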